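/- Let α be irrational with convergent denominators (q_k). If α is singular on average, then q_k^{1/k} → ∞. -/

import Mathlib

open Filter MeasureTheory

/-- Distance from a real number to the nearest integer. -/
noncomputable def nint (x : ℝ) : ℝ := |x - round x|

/-- The denominator `q_k` of the `k`-th continued fraction convergent of `α`. -/
noncomputable def cfDen (α : ℝ) (k : ℕ) : ℝ := (GenContFract.of α).dens k

open scoped Classical

/-- `α` is singular on average: for every `c > 0`, the density of those `ℓ ∈ {1,…,N}`
for which `‖qα‖ ≤ c·2^{-ℓ}` has a solution with `0 < q ≤ 2^ℓ` tends to `1`. -/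
noncomputable def SingularOnAverage (α : ℝ) : Prop :=
  ∀ c : ℝ, 0 < c →
    Tendsto (fun N : ℕ =>
      (((Finset.Icc 1 N).filter (fun ℓ : ℕ =>
        ∃ q : ℕ, 0 < q ∧ q ≤ 2 ^ ℓ ∧ nint (q * α) ≤ c * 2 ^ (-(ℓ : ℤ)))).card : ℝ) / N)
      atTop (nhds 1)

open GenContFract
open GenContFract (of)

section Basics
variable {α : ℝ} (hα : Irrational α)
include hα

lemma my_not_term (n : ℕ) : ¬(of α).TerminatedAt n := by
  intro h
  have hterm : (of α).Terminates := ⟨n, h⟩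
  obtain ⟨q, hq⟩ := (terminates_iff_rat α).1 hterm
  exact hα ⟨q, hq.symm⟩

lemma my_s_some (n : ℕ) : ∃ gp, (of α).s.get? n = some gp :=
  Option.ne_none_iff_exists'.1 (my_not_term hα n)

lemma my_fib_le (n : ℕ) : (Nat.fib (n+1) : ℝ) ≤ (of α).dens n := by
  refine succ_nth_fib_le_of_nth_den ?_
  cases n with
  | zero => exact Or.inl rfl
  | succ n => exact Or.inr (my_not_term hα _)

lemma my_one_le_dens (n : ℕ) : (1 : ℝ) ≤ (of α).dens n := by
  have := my_fib_le hα n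
  have h1 : (1:ℕ) ≤ Nat.fib (n+1) := Nat.fib_pos.2 n.succ_pos
  calc (1:ℝ) ≤ (Nat.fib (n+1) : ℝ) := by exact_mod_cast h1
    _ ≤ _ := this

lemma my_dens_pos (n : ℕ) : (0:ℝ) < (of α).dens n :=
  lt_of_lt_of_le one_pos (my_one_le_dens hα n)

end Basics

section Main
variable {α : ℝ} (hα : Irrational α)
include hα

omit hα in
lemma my_dens_mono {m n : ℕ} (h : m ≤ n) : (of α).dens m ≤ (of α).dens n :=
  monotone_nat_of_le_succ (f := fun n => (of α).dens n) (fun _ => of_den_mono) h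

lemma my_rec (n : ℕ) : ∃ b : ℝ, 1 ≤ b ∧
    (of α).dens (n+2) = b * (of α).dens (n+1) + (of α).dens n ∧
    (of α).nums (n+2) = b * (of α).nums (n+1) + (of α).nums n := by
  obtain ⟨gp, hgp⟩ := my_s_some hα (n+1)
  have ha : gp.a = 1 := (of_partNum_eq_one_and_exists_int_partDen_eq hgp).1
  have hb : 1 ≤ gp.b := of_one_le_get?_partDen (partDen_eq_s_b hgp)
  refine ⟨gp.b, hb, ?_, ?_⟩
  · have := dens_recurrence hgp rfl rfl
    rw [this, ha]; ring
  · have := nums_recurrence hgp rfl rfl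
    rw [this, ha]; ring

lemma my_dens_add (n : ℕ) :
    (of α).dens (n+1) + (of α).dens n ≤ (of α).dens (n+2) := by
  obtain ⟨b, hb, hd, -⟩ := my_rec hα n
  have h1 : (0:ℝ) < (of α).dens (n+1) := my_dens_pos hα _
  nlinarith

lemma my_dens_double (n : ℕ) : 2 * (of α).dens n ≤ (of α).dens (n+2) := by
  have := my_dens_add hα n
  have := my_dens_mono (α := α) (Nat.le_succ n)
  linarith

lemma my_int (n : ℕ) : (∃ z : ℤ, (of α).nums n = z) ∧ (∃ z : ℤ, (of α).dens n = z) := by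
  induction n using Nat.strong_induction_on with
  | _ n ih =>
    match n with
    | 0 =>
      refine ⟨⟨⌊α⌋, ?_⟩, ⟨1, ?_⟩⟩
      · rw [zeroth_num_eq_h, of_h_eq_floor]
      · rw [zeroth_den_eq_one]; norm_num
    | 1 =>
      obtain ⟨gp, hgp⟩ := my_s_some hα 0
      have ha : gp.a = 1 := (of_partNum_eq_one_and_exists_int_partDen_eq hgp).1
      obtain ⟨z, hz⟩ := (of_partNum_eq_one_and_exists_int_partDen_eq hgp).2
      refine ⟨⟨z * ⌊α⌋ + 1, ?_⟩, ⟨z, ?_⟩⟩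
      · rw [first_num_eq hgp, ha, hz, of_h_eq_floor]; push_cast; ring
      · rw [first_den_eq hgp, hz]
    | (n+2) =>
      obtain ⟨gp, hgp⟩ := my_s_some hα (n+1)
      have ha : gp.a = 1 := (of_partNum_eq_one_and_exists_int_partDen_eq hgp).1
      obtain ⟨z, hz⟩ := (of_partNum_eq_one_and_exists_int_partDen_eq hgp).2
      obtain ⟨⟨za, hza⟩, ⟨zb, hzb⟩⟩ := ih n (by omega)
      obtain ⟨⟨za', hza'⟩, ⟨zb', hzb'⟩⟩ := ih (n+1) (by omega)
      refine ⟨⟨z * za' + za, ?_⟩, ⟨z * zb' + zb, ?_⟩⟩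
      · rw [nums_recurrence hgp hza hza', ha, hz]; push_cast; ring
      · rw [dens_recurrence hgp hzb hzb', ha, hz]; push_cast; ring

lemma my_det (n : ℕ) : (of α).nums n * (of α).dens (n+1)
    - (of α).dens n * (of α).nums (n+1) = (-1)^(n+1) :=
  SimpContFract.determinant (s := ⟨of α, GenContFract.of_isSimpContFract α⟩) (my_not_term hα n)

lemma my_approx (n : ℕ) :
    |(of α).dens n * α - (of α).nums n| ≤ 1 / (of α).dens (n+1) := by
  have h := abs_sub_convs_le (my_not_term hα n)
  rw [conv_eq_num_div_den] at h
  have hq : (0:ℝ) < (of α).dens n := my_dens_pos hα n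
  have hq' : (0:ℝ) < (of α).dens (n+1) := my_dens_pos hα (n+1)
  have : (of α).dens n * α - (of α).nums n
      = (of α).dens n * (α - (of α).nums n / (of α).dens n) := by
    field_simp
  rw [this, abs_mul, abs_of_pos hq]
  calc (of α).dens n * |α - (of α).nums n / (of α).dens n|
      ≤ (of α).dens n * (1 / ((of α).dens n * (of α).dens (n+1))) := by
        nlinarith [abs_nonneg (α - (of α).nums n / (of α).dens n)]
    _ = 1 / (of α).dens (n+1) := by field_simp

end Main

noncomputable def myE (α : ℝ) (n : ℕ) : ℝ := (of α).dens n * α - (of α).nums n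

section E
variable {α : ℝ} (hα : Irrational α)
include hα

lemma myE_ne (n : ℕ) : myE α n ≠ 0 := by
  obtain ⟨⟨za, hza⟩, ⟨zb, hzb⟩⟩ := my_int hα n
  intro h
  rw [myE, hza, hzb, sub_eq_zero] at h
  have hzb0 : (zb:ℝ) ≠ 0 := by
    have := my_dens_pos hα n; rw [hzb] at this; exact_mod_cast this.ne'
  exact hα ⟨(za : ℚ)/(zb : ℚ), by push_cast; field_simp at h ⊢; linarith [h]⟩

lemma myE_abs_le (n : ℕ) : |myE α n| ≤ 1 / (of α).dens (n+1) := my_approx hα n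

lemma myE_ident (n : ℕ) :
    (of α).dens (n+1) * myE α n - (of α).dens n * myE α (n+1) = (-1)^n := by
  have h := my_det hα n
  simp only [myE]
  have : (-1:ℝ)^(n+1) = -(-1)^n := by ring
  rw [this] at h
  linarith [h]

lemma myE_low (n : ℕ) : 1 / (2 * (of α).dens (n+1)) ≤ |myE α n| := by
  have hid := myE_ident hα n
  have h1 : |myE α (n+1)| ≤ 1 / (of α).dens (n+2) := myE_abs_le hα (n+1)
  have h2 : 2 * (of α).dens n ≤ (of α).dens (n+2) := my_dens_double hα n
  have hp : (0:ℝ) < (of α).dens n := my_dens_pos hα n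
  have hp1 : (0:ℝ) < (of α).dens (n+1) := my_dens_pos hα (n+1)
  have hp2 : (0:ℝ) < (of α).dens (n+2) := my_dens_pos hα (n+2)
  have habs : (1:ℝ) = |(of α).dens (n+1) * myE α n - (of α).dens n * myE α (n+1)| := by
    rw [hid, abs_pow, abs_neg, abs_one, one_pow]
  have htri : (1:ℝ) ≤ (of α).dens (n+1) * |myE α n| + (of α).dens n * |myE α (n+1)| := by
    rw [habs]
    calc |(of α).dens (n+1) * myE α n - (of α).dens n * myE α (n+1)|
        ≤ |(of α).dens (n+1) * myE α n| + |(of α).dens n * myE α (n+1)| := abs_sub _ _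
      _ = (of α).dens (n+1) * |myE α n| + (of α).dens n * |myE α (n+1)| := by
          rw [abs_mul, abs_mul, abs_of_pos hp1, abs_of_pos hp]
  have hsmall : (of α).dens n * |myE α (n+1)| ≤ 1/2 := by
    calc (of α).dens n * |myE α (n+1)| ≤ (of α).dens n * (1 / (of α).dens (n+2)) := by
          nlinarith
      _ ≤ 1/2 := by rw [mul_one_div, div_le_div_iff₀ (by positivity) (by norm_num)]; nlinarith
  have : 1/2 ≤ (of α).dens (n+1) * |myE α n| := by linarith
  rw [div_le_iff₀ (by positivity)]
  linarith

lemma myE_sign (n : ℕ) : myE α n * myE α (n+1) < 0 := by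
  rcases lt_or_ge (myE α n * myE α (n+1)) 0 with h | h
  · exact h
  exfalso
  have hne : myE α n * myE α (n+1) ≠ 0 := mul_ne_zero (myE_ne hα n) (myE_ne hα (n+1))
  have hpos : 0 < myE α n * myE α (n+1) := lt_of_le_of_ne h (Ne.symm hne)
  have hid := myE_ident hα n
  have h1 : |myE α n| ≤ 1 / (of α).dens (n+1) := myE_abs_le hα n
  have h2 : |myE α (n+1)| ≤ 1 / (of α).dens (n+2) := myE_abs_le hα (n+1)
  have hd2 : 2 * (of α).dens n ≤ (of α).dens (n+2) := my_dens_double hα n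
  have hp : (0:ℝ) < (of α).dens n := my_dens_pos hα n
  have hp1 : (0:ℝ) < (of α).dens (n+1) := my_dens_pos hα (n+1)
  have hp2 : (0:ℝ) < (of α).dens (n+2) := my_dens_pos hα (n+2)
  set x := (of α).dens (n+1) * myE α n with hx
  set y := (of α).dens n * myE α (n+1) with hy
  have hxy : 0 < x * y := by
    rw [hx, hy]
    calc (0:ℝ) < ((of α).dens (n+1) * (of α).dens n) * (myE α n * myE α (n+1)) := by positivity
      _ = (of α).dens (n+1) * myE α n * ((of α).dens n * myE α (n+1)) := by ring
  have hxle : |x| ≤ 1 := by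
    rw [hx, abs_mul, abs_of_pos hp1]
    calc (of α).dens (n+1) * |myE α n| ≤ (of α).dens (n+1) * (1/(of α).dens (n+1)) := by nlinarith
      _ = 1 := by field_simp
  have hyle : |y| ≤ 1/2 := by
    rw [hy, abs_mul, abs_of_pos hp]
    calc (of α).dens n * |myE α (n+1)| ≤ (of α).dens n * (1 / (of α).dens (n+2)) := by nlinarith
      _ ≤ 1/2 := by rw [mul_one_div, div_le_div_iff₀ (by positivity) (by norm_num)]; nlinarith
  have hd : x - y = (-1:ℝ)^n := hid
  rw [abs_le] at hxle hyle
  rcases Nat.even_or_odd n with he | ho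
  · rw [he.neg_one_pow] at hd
    nlinarith
  · rw [ho.neg_one_pow] at hd
    nlinarith

omit hα in
lemma abs_add_ge_left {x y : ℝ} (h : 0 ≤ x * y) : |x| ≤ |x + y| := by
  rcases le_or_gt 0 x with hx | hx
  · have hy : 0 ≤ y ∨ x = 0 := by
      rcases lt_or_eq_of_le hx with h' | h'
      · left; nlinarith
      · right; exact h'.symm
    rcases hy with hy | rfl
    · rw [abs_of_nonneg hx, abs_of_nonneg (by linarith)]; linarith
    · simp
  · have hy : y ≤ 0 := by nlinarith
    rw [abs_of_neg hx, abs_of_nonpos (by linarith)]; linarith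

/-- Best approximation property. -/
lemma my_best (n : ℕ) (p q : ℤ) (hq : 0 < q) (hqlt : (q:ℝ) < (of α).dens (n+1)) :
    |myE α n| ≤ |q * α - p| := by
  obtain ⟨⟨a₀, ha₀⟩, ⟨b₀, hb₀⟩⟩ := my_int hα n
  obtain ⟨⟨a₁, ha₁⟩, ⟨b₁, hb₁⟩⟩ := my_int hα (n+1)
  -- integer determinant
  set d : ℤ := (-1)^(n+1) with hd
  have hdet : a₀ * b₁ - b₀ * a₁ = d := by
    have h := my_det hα n
    rw [ha₀, hb₀, ha₁, hb₁] at h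
    exact_mod_cast h
  have hdd : d * d = 1 := by rw [hd, ← pow_add]; exact Even.neg_one_pow ⟨n+1, by ring⟩
  have hb₀pos : (0:ℤ) < b₀ := by
    have := my_dens_pos hα n; rw [hb₀] at this; exact_mod_cast this
  have hb₁pos : (0:ℤ) < b₁ := by
    have := my_dens_pos hα (n+1); rw [hb₁] at this; exact_mod_cast this
  have hqlt' : q < b₁ := by rw [hb₁] at hqlt; exact_mod_cast hqlt
  set a : ℤ := d * (p * b₁ - q * a₁) with ha
  set b : ℤ := d * (q * a₀ - p * b₀) with hb
  have hq_eq : a * b₀ + b * b₁ = q := by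
    rw [ha, hb]; linear_combination (q * d) * hdet + q * hdd
  have hp_eq : a * a₀ + b * a₁ = p := by
    rw [ha, hb]; linear_combination (p * d) * hdet + p * hdd
  have hE_eq : (q:ℝ) * α - p = a * myE α n + b * myE α (n+1) := by
    rw [myE, myE, ha₀, hb₀, ha₁, hb₁, ← hq_eq, ← hp_eq]
    push_cast
    ring
  have hane : a ≠ 0 := by
    intro h0
    rw [h0, zero_mul, zero_add] at hq_eq
    rcases le_or_gt b 0 with hb0 | hb0
    · nlinarith
    · have : 1 ≤ b := hb0
      nlinarith
  have hab : a * b ≤ 0 := by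
    by_contra hcon
    push_neg at hcon
    rcases lt_or_gt_of_ne (fun h => by rw [h, zero_mul] at hcon; exact lt_irrefl _ hcon :
        a ≠ 0) with ha0 | ha0
    · have hb0 : b < 0 := by nlinarith
      nlinarith
    · have hb0 : 0 < b := by nlinarith
      nlinarith
  have hsign := myE_sign hα n
  have hprod : 0 ≤ ((a:ℝ) * myE α n) * ((b:ℝ) * myE α (n+1)) := by
    have : ((a:ℝ) * myE α n) * ((b:ℝ) * myE α (n+1))
        = ((a*b : ℤ) : ℝ) * (myE α n * myE α (n+1)) := by push_cast; ring
    rw [this]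
    have h1 : ((a*b : ℤ):ℝ) ≤ 0 := by exact_mod_cast hab
    nlinarith
  calc |myE α n| ≤ |(a:ℝ)| * |myE α n| := by
        have : (1:ℝ) ≤ |(a:ℝ)| := by
          rw [← Int.cast_abs]
          exact_mod_cast Int.one_le_abs hane
        nlinarith [abs_nonneg (myE α n)]
    _ = |(a:ℝ) * myE α n| := (abs_mul _ _).symm
    _ ≤ |(a:ℝ) * myE α n + (b:ℝ) * myE α (n+1)| := abs_add_ge_left hprod
    _ = |q * α - p| := by rw [hE_eq]

end E


open scoped Classical in
noncomputable def myKappa (α : ℝ) (ℓ : ℕ) : ℕ :=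
  Nat.findGreatest (fun n => (of α).dens n ≤ (2:ℝ)^ℓ) (2^ℓ + 5)

/-- The good predicate with c = 1/8. -/
def Pgood (α : ℝ) (ℓ : ℕ) : Prop :=
  ∃ q : ℕ, 0 < q ∧ q ≤ 2 ^ ℓ ∧ nint (q * α) ≤ (1/8 : ℝ) * 2 ^ (-(ℓ : ℤ))

section Kappa
variable {α : ℝ} (hα : Irrational α)
include hα

lemma le_kappa {n ℓ : ℕ} (h : (of α).dens n ≤ (2:ℝ)^ℓ) : n ≤ myKappa α ℓ := by
  classical
  have hb : n ≤ 2^ℓ + 5 := by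
    rcases le_or_gt n 5 with h5 | h5
    · exact h5.trans (Nat.le_add_left 5 _)
    · have h1 : (n:ℝ) ≤ (of α).dens n := by
        calc (n:ℝ) ≤ (Nat.fib n : ℝ) := by exact_mod_cast Nat.le_fib_self h5.le
          _ ≤ (Nat.fib (n+1) : ℝ) := by exact_mod_cast Nat.fib_le_fib_succ
          _ ≤ _ := my_fib_le hα n
      have : (n:ℝ) ≤ ((2^ℓ : ℕ) : ℝ) := by push_cast; linarith
      have := Nat.cast_le.1 this
      omega
  exact Nat.le_findGreatest hb h

omit hα in
lemma kappa_spec (ℓ : ℕ) : (of α).dens (myKappa α ℓ) ≤ (2:ℝ)^ℓ := by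
  classical
  rcases Nat.eq_zero_or_pos (myKappa α ℓ) with h0 | hpos
  · rw [h0, GenContFract.zeroth_den_eq_one]
    exact one_le_pow₀ one_le_two
  · exact Nat.findGreatest_of_ne_zero rfl (Nat.pos_iff_ne_zero.1 hpos)

lemma kappa_succ_lt (ℓ : ℕ) : (2:ℝ)^ℓ < (of α).dens (myKappa α ℓ + 1) := by
  by_contra h
  push_neg at h
  exact Nat.not_succ_le_self _ (le_kappa hα h)

lemma kappa_mono {ℓ ℓ' : ℕ} (h : ℓ ≤ ℓ') : myKappa α ℓ ≤ myKappa α ℓ' :=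
  le_kappa hα (le_trans (kappa_spec (α := α) ℓ) (pow_le_pow_right₀ one_le_two h))

lemma kappa_jump (ℓ : ℕ) : myKappa α (ℓ+1) ≤ myKappa α ℓ + 2 := by
  by_contra h
  push_neg at h
  have h3 : myKappa α ℓ + 3 ≤ myKappa α (ℓ+1) := h
  have hlow : (2:ℝ)^ℓ < (of α).dens (myKappa α ℓ + 1) := kappa_succ_lt hα ℓ
  have hup : (of α).dens (myKappa α ℓ + 3) ≤ (2:ℝ)^(ℓ+1) :=
    le_trans (my_dens_mono (α := α) h3) (kappa_spec (α := α) (ℓ+1))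
  have hdbl : 2 * (of α).dens (myKappa α ℓ + 1) ≤ (of α).dens (myKappa α ℓ + 3) :=
    my_dens_double hα (myKappa α ℓ + 1)
  have : (2:ℝ)^(ℓ+1) = 2 * 2^ℓ := by ring
  linarith

lemma good_kappa_eq {ℓ : ℕ} (hg : Pgood α ℓ) : myKappa α (ℓ+1) = myKappa α ℓ := by
  obtain ⟨q, hq0, hqle, hnint⟩ := hg
  set n := myKappa α ℓ with hn
  -- dens (n+1) ≥ 4 * 2^ℓ
  have hql : (q:ℝ) < (of α).dens (n+1) := by
    calc (q:ℝ) ≤ ((2^ℓ : ℕ) : ℝ) := by exact_mod_cast hqle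
      _ = (2:ℝ)^ℓ := by push_cast; ring
      _ < _ := kappa_succ_lt hα ℓ
  have hbest := my_best hα n (round ((q:ℝ) * α)) (q:ℤ) (by exact_mod_cast hq0)
    (by exact_mod_cast hql)
  have hlow := myE_low hα n
  have hnint : |(q:ℝ) * α - round ((q:ℝ)*α)| ≤ (1/8 : ℝ) * 2 ^ (-(ℓ:ℤ)) := by
    have : ((q:ℤ):ℝ) = (q:ℝ) := by push_cast; ring
    exact hnint
  have hz : ((2:ℝ)) ^ (-(ℓ:ℤ)) = ((2:ℝ)^ℓ)⁻¹ := by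
    rw [zpow_neg, zpow_natCast]
  have hchain : 1 / (2 * (of α).dens (n+1)) ≤ (1/8:ℝ) * ((2:ℝ)^ℓ)⁻¹ := by
    rw [← hz]
    calc 1 / (2 * (of α).dens (n+1)) ≤ |myE α n| := hlow
      _ ≤ |((q:ℤ):ℝ) * α - ((round ((q:ℝ)*α) : ℤ):ℝ)| := hbest
      _ ≤ (1/8:ℝ) * 2 ^ (-(ℓ:ℤ)) := by push_cast; exact hnint
  have hp : (0:ℝ) < (of α).dens (n+1) := my_dens_pos hα (n+1)
  have hpow : (0:ℝ) < (2:ℝ)^ℓ := by positivity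
  have hbig : (2:ℝ)^(ℓ+1) < (of α).dens (n+1) := by
    rw [div_le_iff₀ (by positivity)] at hchain
    have hinv : (2:ℝ)^ℓ * ((2:ℝ)^ℓ)⁻¹ = 1 := mul_inv_cancel₀ (ne_of_gt hpow)
    have h2 := mul_le_mul_of_nonneg_left hchain hpow.le
    have hps : (2:ℝ)^(ℓ+1) = 2 * 2^ℓ := by ring
    nlinarith [hinv, h2]
  -- now κ(ℓ+1) = n
  refine le_antisymm ?_ (kappa_mono hα (Nat.le_succ ℓ))
  by_contra hcon
  push_neg at hcon
  have h1 : n + 1 ≤ myKappa α (ℓ+1) := hcon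
  exact absurd (lt_of_lt_of_le hbig (le_trans (my_dens_mono (α := α) h1)
    (kappa_spec (α := α) (ℓ+1)))) (lt_irrefl _)

end Kappa

open scoped Classical

section Count
variable {α : ℝ} (hα : Irrational α)
include hα

lemma kappa_count (N : ℕ) :
    myKappa α N ≤ myKappa α 0 +
      2 * ((Finset.range N).filter (fun ℓ => myKappa α (ℓ+1) ≠ myKappa α ℓ)).card := by
  induction N with
  | zero => simp
  | succ N ih =>
    have hsub : (Finset.range N).filter (fun ℓ => myKappa α (ℓ+1) ≠ myKappa α ℓ) ⊆
        (Finset.range (N+1)).filter (fun ℓ => myKappa α (ℓ+1) ≠ myKappa α ℓ) :=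
      Finset.filter_subset_filter _ (Finset.range_subset_range.2 (Nat.le_succ N))
    rcases eq_or_ne (myKappa α (N+1)) (myKappa α N) with heq | hne
    · rw [heq]
      have := Finset.card_le_card hsub
      omega
    · have hmem : N ∈ (Finset.range (N+1)).filter (fun ℓ => myKappa α (ℓ+1) ≠ myKappa α ℓ) := by
        simp [hne]
      have hcard : ((Finset.range N).filter (fun ℓ => myKappa α (ℓ+1) ≠ myKappa α ℓ)).card + 1
          ≤ ((Finset.range (N+1)).filter (fun ℓ => myKappa α (ℓ+1) ≠ myKappa α ℓ)).card := by
        apply Finset.card_lt_card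
        exact Finset.ssubset_iff_of_subset hsub |>.2 ⟨N, hmem, by simp⟩
      have hj := kappa_jump hα N
      omega

lemma jump_sub_bad (N : ℕ) :
    (Finset.range N).filter (fun ℓ => myKappa α (ℓ+1) ≠ myKappa α ℓ) ⊆
      insert 0 ((Finset.Icc 1 N).filter (fun ℓ => ¬ Pgood α ℓ)) := by
  intro ℓ hℓ
  simp only [Finset.mem_filter, Finset.mem_range] at hℓ
  obtain ⟨hlt, hne⟩ := hℓ
  rcases Nat.eq_zero_or_pos ℓ with h0 | hpos
  · simp [h0]
  · refine Finset.mem_insert_of_mem ?_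
    simp only [Finset.mem_filter, Finset.mem_Icc]
    exact ⟨⟨hpos, by omega⟩, fun hg => hne (good_kappa_eq hα hg)⟩

lemma kappa_le_bad (N : ℕ) :
    myKappa α N ≤ myKappa α 0 + 2 +
      2 * ((Finset.Icc 1 N).filter (fun ℓ => ¬ Pgood α ℓ)).card := by
  have h1 := kappa_count hα N
  have h2 : ((Finset.range N).filter (fun ℓ => myKappa α (ℓ+1) ≠ myKappa α ℓ)).card
      ≤ 1 + ((Finset.Icc 1 N).filter (fun ℓ => ¬ Pgood α ℓ)).card := by
    calc _ ≤ (insert 0 ((Finset.Icc 1 N).filter (fun ℓ => ¬ Pgood α ℓ))).card :=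
          Finset.card_le_card (jump_sub_bad hα N)
      _ ≤ _ := le_trans (Finset.card_insert_le _ _) (by omega)
  omega

omit hα in
lemma bad_card_eq (N : ℕ) :
    ((Finset.Icc 1 N).filter (fun ℓ => ¬ Pgood α ℓ)).card
      = N - ((Finset.Icc 1 N).filter (fun ℓ => Pgood α ℓ)).card := by
  have h := Finset.card_filter_add_card_filter_not
    (s := Finset.Icc 1 N) (p := fun ℓ => Pgood α ℓ)
  rw [Nat.card_Icc] at h
  omega

end Count

section Final
variable {α : ℝ} (hα : Irrational α)
include hα

lemma main_pow
    (hG : Tendsto (fun N : ℕ =>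
      ((((Finset.Icc 1 N).filter (fun ℓ => Pgood α ℓ)).card : ℝ)) / N) atTop (nhds 1))
    (R : ℕ) (hR : 1 ≤ R) :
    ∀ᶠ n : ℕ in atTop, ((2:ℝ)^R)^n ≤ (of α).dens n := by
  set K0 : ℕ := myKappa α 0 with hK0
  set δ : ℝ := 1/(16*R) with hδdef
  have hRpos : (0:ℝ) < R := by exact_mod_cast hR
  have hδ : (0:ℝ) < δ := by positivity
  -- eventual bound on G
  have h1 : ∀ᶠ N : ℕ in atTop,
      1 - δ < (((Finset.Icc 1 N).filter (fun ℓ => Pgood α ℓ)).card : ℝ) / N :=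
    hG.eventually (eventually_gt_nhds (by linarith))
  obtain ⟨N₀, hN₀⟩ := (h1.and (eventually_ge_atTop 1)).exists_forall_of_atTop
  -- bound on κ for N ≥ N₀
  have hκ : ∀ N : ℕ, N₀ ≤ N → (myKappa α N : ℝ) ≤ (K0:ℝ) + 2 + 2 * δ * N := by
    intro N hN
    obtain ⟨hfrac, hN1⟩ := hN₀ N hN
    set G : ℕ := ((Finset.Icc 1 N).filter (fun ℓ => Pgood α ℓ)).card with hGdef
    have hGle : G ≤ N := by
      calc G ≤ (Finset.Icc 1 N).card := Finset.card_filter_le _ _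
        _ = N := by rw [Nat.card_Icc]; omega
    have hNpos : (0:ℝ) < N := by exact_mod_cast hN1
    have hfrac' : (1 - δ) * N < G := (lt_div_iff₀ hNpos).1 hfrac
    have hsub : ((N:ℝ) - G) < δ * N := by nlinarith
    have hcast : ((N - G : ℕ) : ℝ) = (N:ℝ) - G := by
      push_cast [Nat.cast_sub hGle]; ring
    have hb := kappa_le_bad hα N
    rw [bad_card_eq (α := α) N] at hb
    have hb' : (myKappa α N : ℝ) ≤ (K0:ℝ) + 2 + 2 * ((N - G : ℕ) : ℝ) := by
      exact_mod_cast hb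
    rw [hcast] at hb'
    linarith
  -- now the eventual bound in n
  set n₀ : ℕ := max (myKappa α (max N₀ 1) + 1) (2 * (K0 + 5)) with hn₀
  filter_upwards [eventually_ge_atTop n₀] with n hn
  have hex : ∃ N : ℕ, (of α).dens n ≤ (2:ℝ)^N := by
    obtain ⟨N, hN⟩ := pow_unbounded_of_one_lt ((of α).dens n) (one_lt_two (α := ℝ))
    exact ⟨N, hN.le⟩
  set ν : ℕ := Nat.find hex with hν
  have hνspec : (of α).dens n ≤ (2:ℝ)^ν := Nat.find_spec hex
  have hnκ : n ≤ myKappa α ν := le_kappa hα hνspec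
  have hνge : max N₀ 1 ≤ ν := by
    by_contra hcon
    push_neg at hcon
    have : myKappa α ν ≤ myKappa α (max N₀ 1) := kappa_mono hα hcon.le
    have hn1 : myKappa α (max N₀ 1) + 1 ≤ n := le_trans (le_max_left _ _) hn
    omega
  have hκν := hκ ν (le_trans (le_max_left _ _) hνge)
  have hnn : (n:ℝ) ≤ (K0:ℝ) + 2 + 2 * δ * ν := le_trans (by exact_mod_cast hnκ) hκν
  have h2δ : 2 * δ = 1/(8*R) := by rw [hδdef]; ring
  have hνlb : 8 * (R:ℝ) * ((n:ℝ) - K0 - 2) ≤ ν := by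
    rw [h2δ, one_div_mul_eq_div] at hnn
    have h8R : (0:ℝ) < 8*R := by positivity
    have hd : (n:ℝ) - K0 - 2 ≤ (ν:ℝ) / (8*R) := by linarith
    calc 8 * (R:ℝ) * ((n:ℝ) - K0 - 2) ≤ 8*(R:ℝ) * ((ν:ℝ)/(8*R)) := by
          exact mul_le_mul_of_nonneg_left hd (by positivity)
      _ = ν := by field_simp
  have hn2 : 2 * (K0 + 5) ≤ n := le_trans (le_max_right _ _) hn
  have hn2' : (2:ℝ) * (K0 + 5) ≤ n := by exact_mod_cast hn2
  have hR' : (1:ℝ) ≤ (R:ℝ) := by exact_mod_cast hR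
  have hRn : ((R * n + 1 : ℕ) : ℝ) ≤ (ν : ℕ) := by
    push_cast
    nlinarith [mul_le_mul_of_nonneg_left hn2' hRpos.le,
      mul_nonneg hRpos.le (Nat.cast_nonneg n)]
  have hRn' : R * n + 1 ≤ ν := by exact_mod_cast hRn
  have hνpos : 1 ≤ ν := by omega
  have hmin : ¬ ((of α).dens n ≤ (2:ℝ)^(ν-1)) := Nat.find_min hex (by omega)
  push_neg at hmin
  have hple : (2:ℝ)^(R*n) ≤ (2:ℝ)^(ν-1) := by
    apply pow_le_pow_right₀ one_le_two
    omega
  calc ((2:ℝ)^R)^n = (2:ℝ)^(R*n) := by rw [← pow_mul]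
    _ ≤ (2:ℝ)^(ν-1) := hple
    _ ≤ (of α).dens n := hmin.le

end Final


theorem stmt9 (α : ℝ) (hα : Irrational α) (hs : SingularOnAverage α) :
    Tendsto (fun k : ℕ => cfDen α k ^ ((k : ℝ)⁻¹)) atTop atTop := by
  have hG := hs (1/8) (by norm_num)
  have hG' : Tendsto (fun N : ℕ =>
      ((((Finset.Icc 1 N).filter (fun ℓ => Pgood α ℓ)).card : ℝ)) / N) atTop (nhds 1) := hG
  rw [tendsto_atTop]
  intro b
  obtain ⟨R, hRb⟩ := pow_unbounded_of_one_lt (max b 1) (one_lt_two (α := ℝ))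
  have hR1 : 1 ≤ R := by
    by_contra h
    push_neg at h
    interval_cases R
    · simp at hRb
  filter_upwards [main_pow hα hG' R hR1, eventually_ge_atTop 1] with n h1 h2
  have hn0 : (n:ℝ) ≠ 0 := by
    have : 0 < n := h2
    exact_mod_cast this.ne'
  have key : ((((2:ℝ)^R)^n) : ℝ) ^ ((n:ℝ)⁻¹) = (2:ℝ)^R := by
    rw [← Real.rpow_natCast ((2:ℝ)^R) n, ← Real.rpow_mul (by positivity),
      mul_inv_cancel₀ hn0, Real.rpow_one]
  show b ≤ cfDen α n ^ ((n:ℝ)⁻¹)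
  rw [cfDen]
  calc b ≤ max b 1 := le_max_left _ _
    _ ≤ (2:ℝ)^R := hRb.le
    _ = ((((2:ℝ)^R)^n) : ℝ) ^ ((n:ℝ)⁻¹) := key.symm
    _ ≤ (of α).dens n ^ ((n:ℝ)⁻¹) :=
        Real.rpow_le_rpow (by positivity) h1 (by positivity)
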